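/- Let n ≥ 1, m ≥ 4n−1, and let R_p ∈ ℂ^{n×n} be the pinhole reference, R_p(t1,t2) = 1 if (t1,t2) = (n−1,n−1) and 0 otherwise. Then for all k1, k2 ∈ {0,...,m−1}, the reference scaling factor is constant: S_{R_p}(k1,k2) = n²/m⁴. -/

import Mathlib

open Complex MeasureTheory ProbabilityTheory Matrix ComplexConjugate
open scoped Kronecker

noncomputable section

/-- Zero-extension of a matrix to integer indices: out-of-range entries are `0`. -/
def zext {n1 n2 : ℕ} (X : Matrix (Fin n1) (Fin n2) ℂ) (t1 t2 : ℤ) : ℂ :=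
  if h : 0 ≤ t1 ∧ t1 < (n1 : ℤ) ∧ 0 ≤ t2 ∧ t2 < (n2 : ℤ) then
    X ⟨t1.toNat, by omega⟩ ⟨t2.toNat, by omega⟩
  else 0

/-- Cross-correlation `C_{[X1,X2]}(s1,s2)`, with out-of-range terms taken as `0`. -/
def crossCorr {n1 n2 : ℕ} (X1 X2 : Matrix (Fin n1) (Fin n2) ℂ) (s1 s2 : ℤ) : ℂ :=
  ∑ t1 : Fin n1, ∑ t2 : Fin n2,
    X1 t1 t2 * conj (zext X2 (((t1 : ℕ) : ℤ) - s1) (((t2 : ℕ) : ℤ) - s2))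

/-- Autocorrelation `A_X = C_{[X,X]}`. -/
def autocorr {n1 n2 : ℕ} (X : Matrix (Fin n1) (Fin n2) ℂ) : ℤ → ℤ → ℂ :=
  crossCorr X X

/-- Horizontal concatenation `[X, R]` of two `n × n` matrices. -/
def hcat {n : ℕ} (X R : Matrix (Fin n) (Fin n) ℂ) : Matrix (Fin n) (Fin (2 * n)) ℂ :=
  Matrix.of fun t1 t2 =>
    if h : (t2 : ℕ) < n then X t1 ⟨t2, h⟩ else R t1 ⟨(t2 : ℕ) - n, by omega⟩

/-- The size `m1 × m2` oversampled discrete Fourier transform of an `n1 × n2` signal. -/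
def dft2 {n1 n2 : ℕ} (m1 m2 : ℕ) (Z : Matrix (Fin n1) (Fin n2) ℂ) (k1 k2 : ℕ) : ℂ :=
  ∑ t1 : Fin n1, ∑ t2 : Fin n2,
    Z t1 t2 * Complex.exp (-(2 * (Real.pi : ℂ) * Complex.I) *
      (((t1 : ℕ) : ℂ) * (k1 : ℂ) / (m1 : ℂ) + ((t2 : ℕ) : ℂ) * (k2 : ℂ) / (m2 : ℂ)))

/-- Quadrant cross-correlation `C°_{[X,R]}(i,j) = C_{[X,R]}(i-(n-1), j-(n-1))`. -/
def quadCC {n : ℕ} (X R : Matrix (Fin n) (Fin n) ℂ) : Matrix (Fin n) (Fin n) ℂ :=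
  Matrix.of fun i j =>
    crossCorr X R (((i : ℕ) : ℤ) - ((n : ℤ) - 1)) (((j : ℕ) : ℤ) - ((n : ℤ) - 1))

/-- Columnwise vectorization: the pair `(j, i)` (column `j`, row `i`) indexes entry `X i j`. -/
def vecM {a b : ℕ} (X : Matrix (Fin a) (Fin b) ℂ) : Fin b × Fin a → ℂ :=
  fun p => X p.2 p.1

/-- The matrix `M_R` satisfying `vec (C°_{[X,R]}) = M_R • vec X` (columnwise vectorization). -/
def MR {n : ℕ} (R : Matrix (Fin n) (Fin n) ℂ) :
    Matrix (Fin n × Fin n) (Fin n × Fin n) ℂ :=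
  Matrix.of fun p q =>
    conj (zext R (((q.2 : ℕ) : ℤ) - ((p.2 : ℕ) : ℤ) + ((n : ℤ) - 1))
      (((q.1 : ℕ) : ℤ) - ((p.1 : ℕ) : ℤ) + ((n : ℤ) - 1)))

/-- `P1 · F_LA^*`: row `t ∈ {0,…,n-1}` corresponds to the column `t - (n-1)` of `F_LA`. -/
def P1FLA (n m : ℕ) : Matrix (Fin n) (Fin m) ℂ :=
  Matrix.of fun t k =>
    Complex.exp ((2 * (Real.pi : ℂ) * Complex.I) * ((k : ℕ) : ℂ) *
      (((t : ℕ) : ℂ) - ((n : ℂ) - 1)) / (m : ℂ))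

/-- `P2 · F_RA^*`: row `t ∈ {0,…,n-1}` corresponds to the column `t - (2n-1)` of `F_RA`. -/
def P2FRA (n m : ℕ) : Matrix (Fin n) (Fin m) ℂ :=
  Matrix.of fun t k =>
    Complex.exp ((2 * (Real.pi : ℂ) * Complex.I) * ((k : ℕ) : ℂ) *
      (((t : ℕ) : ℂ) - (2 * (n : ℂ) - 1)) / (m : ℂ))

/-- The referenced-deconvolution matrix
`T_R = (1/m²) · M_R⁻¹ · [(P2 F_RA^*) ⊗ (P1 F_LA^*)]`. -/
def TR {n : ℕ} (m : ℕ) (R : Matrix (Fin n) (Fin n) ℂ) :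
    Matrix (Fin n × Fin n) (Fin m × Fin m) ℂ :=
  ((m : ℂ) ^ 2)⁻¹ • ((MR R)⁻¹ * (P2FRA n m ⊗ₖ P1FLA n m))

/-- The reference scaling factor: `S_R(k1,k2)` is the squared ℓ²-norm of the column of `T_R`
indexed by the pair `(k1, k2)` (i.e. column `m·k1 + k2`). -/
def SR {n : ℕ} (m : ℕ) (R : Matrix (Fin n) (Fin n) ℂ) (k1 k2 : Fin m) : ℝ :=
  ∑ p : Fin n × Fin n, ‖TR m R p (k1, k2)‖ ^ 2

/-- Lower-triangular all-ones matrix `1_L`. -/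
def oneL (n : ℕ) : Matrix (Fin n) (Fin n) ℂ :=
  Matrix.of fun i j => if j ≤ i then 1 else 0

/-- First-order difference matrix `D_n` (the inverse of `1_L`). -/
def Dmat (n : ℕ) : Matrix (Fin n) (Fin n) ℂ :=
  Matrix.of fun i j => if i = j then 1 else if (j : ℕ) + 1 = (i : ℕ) then -1 else 0

/-- Pinhole reference. -/
def pinholeRef (n : ℕ) : Matrix (Fin n) (Fin n) ℂ :=
  Matrix.of fun t1 t2 => if (t1 : ℕ) = n - 1 ∧ (t2 : ℕ) = n - 1 then 1 else 0

/-- Slit reference. -/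
def slitRef (n : ℕ) : Matrix (Fin n) (Fin n) ℂ :=
  Matrix.of fun _ t2 => if (t2 : ℕ) = n - 1 then 1 else 0

/-- Block reference. -/
def blockRef (n : ℕ) : Matrix (Fin n) (Fin n) ℂ :=
  Matrix.of fun _ _ => 1

lemma MR_pinhole (n : ℕ) (hn : 1 ≤ n) :
    MR (pinholeRef n) = (1 : Matrix (Fin n × Fin n) (Fin n × Fin n) ℂ) := by
  ext ⟨p1, p2⟩ ⟨q1, q2⟩
  simp only [MR, pinholeRef, zext, Matrix.of_apply, Matrix.one_apply]
  have hp1 := p1.isLt; have hp2 := p2.isLt; have hq1 := q1.isLt; have hq2 := q2.isLt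
  by_cases h : (⟨p1, p2⟩ : Fin n × Fin n) = ⟨q1, q2⟩
  · have h1 : p1 = q1 ∧ p2 = q2 := by
      simpa [Prod.ext_iff] using h
    obtain ⟨rfl, rfl⟩ := h1
    rw [if_pos h]
    rw [dif_pos (by constructor <;> omega)]
    rw [if_pos (by constructor <;> omega)]
    simp
  · rw [if_neg h]
    have hne : ¬((p1 : ℕ) = q1 ∧ (p2 : ℕ) = q2) := by
      intro ⟨a, b⟩
      exact h (by ext <;> simp [a, b])
    split_ifs with h1 h2
    · exfalso
      apply hne
      constructor <;> omega
    · simp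
    · simp

lemma norm_P1FLA (n m : ℕ) (t : Fin n) (k : Fin m) : ‖P1FLA n m t k‖ = 1 := by
  simp only [P1FLA, Matrix.of_apply]
  have : (2 * (Real.pi : ℂ) * Complex.I) * ((k : ℕ) : ℂ) *
      (((t : ℕ) : ℂ) - ((n : ℂ) - 1)) / (m : ℂ) =
      (((2 * Real.pi * (k : ℕ) * (((t : ℕ) : ℝ) - ((n : ℝ) - 1)) / (m : ℝ)) : ℝ) : ℂ) *
        Complex.I := by
    push_cast; ring
  rw [this, Complex.norm_exp_ofReal_mul_I]

lemma norm_P2FRA (n m : ℕ) (t : Fin n) (k : Fin m) : ‖P2FRA n m t k‖ = 1 := by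
  simp only [P2FRA, Matrix.of_apply]
  have : (2 * (Real.pi : ℂ) * Complex.I) * ((k : ℕ) : ℂ) *
      (((t : ℕ) : ℂ) - (2 * (n : ℂ) - 1)) / (m : ℂ) =
      (((2 * Real.pi * (k : ℕ) * (((t : ℕ) : ℝ) - (2 * (n : ℝ) - 1)) / (m : ℝ)) : ℝ) : ℂ) *
        Complex.I := by
    push_cast; ring
  rw [this, Complex.norm_exp_ofReal_mul_I]

/-- The reference scaling factor of the pinhole reference is constant:
`S_{R_p}(k1,k2) = n²/m⁴`. -/
theorem pinhole_scaling_factor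
    (n m : ℕ) (hn : 1 ≤ n) (hm : 4 * n - 1 ≤ m) (k1 k2 : Fin m) :
    SR m (pinholeRef n) k1 k2 = (n : ℝ) ^ 2 / (m : ℝ) ^ 4 := by
  have hm0 : (0 : ℝ) < (m : ℝ) := by
    have : 3 ≤ m := by omega
    exact_mod_cast by omega
  have hentry : ∀ p : Fin n × Fin n,
      ‖TR m (pinholeRef n) p (k1, k2)‖ ^ 2 = 1 / (m : ℝ) ^ 4 := by
    intro p
    have : TR m (pinholeRef n) p (k1, k2) =
        ((m : ℂ) ^ 2)⁻¹ * (P2FRA n m p.1 k1 * P1FLA n m p.2 k2) := by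
      simp [TR, MR_pinhole n hn, inv_one, Matrix.one_mul,
        Matrix.kroneckerMap_apply, Matrix.smul_apply, smul_eq_mul]
    rw [this]
    rw [norm_mul, norm_mul, norm_P1FLA, norm_P2FRA, norm_inv, norm_pow,
      Complex.norm_natCast]
    rw [mul_one, mul_one]
    rw [inv_pow]
    ring_nf
  rw [SR]
  rw [Finset.sum_congr rfl (fun p _ => hentry p)]
  rw [Finset.sum_const]
  simp only [Finset.card_univ, Fintype.card_prod, Fintype.card_fin, nsmul_eq_mul]
  push_cast
  field_simp
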